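/- Fix λ > 0 and constants G₀ > 0, c_B > 0, and define p₀ⁱ(x) = (G₀·c_B/(λ(√λ + 1)))·(1 − e^{√λ·x}) and p₀ᵒ(x) = G₀·c_B·(−x²/2 + (√λ/(√λ + 1))·e^{−x} + ((λ − 1)/(√λ(√λ + 1)))·x − √λ/(√λ + 1)). Then with c₀ⁱ(x) = (c_B/(√λ + 1))·e^{√λ·x} and c₀ᵒ(x) = c_B − (c_B·√λ/(√λ + 1))·e^{−x}: (1) −(p₀ⁱ)''(x) = G₀·c₀ⁱ(x) for all x ≤ 0; (2) −(p₀ᵒ)''(x) = G₀·c₀ᵒ(x) for all x ≥ 0; (3) p₀ⁱ(0) = p₀ᵒ(0) = 0; (4) (p₀ⁱ)'(0) = (p₀ᵒ)'(0); (5) 0 ≤ p₀ⁱ(x) ≤ G₀·c_B/(λ(√λ + 1)) for all x ≤ 0, so p₀ⁱ is bounded on (−∞, 0]. -/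

import Mathlib

private lemma hexp_aux (a x : ℝ) :
    HasDerivAt (fun y : ℝ => Real.exp (a * y)) (a * Real.exp (a * x)) x := by
  simpa [mul_comm, Function.comp_def] using (Real.hasDerivAt_exp (a * x)).comp x ((hasDerivAt_id x).const_mul a)

theorem stmt_11 (G0 cB lam : ℝ) (hG0 : 0 < G0) (hcB : 0 < cB) (hlam : 0 < lam)
    (c0i c0o p0i p0o : ℝ → ℝ)
    (hc0i : c0i = fun x : ℝ => cB / (Real.sqrt lam + 1) * Real.exp (Real.sqrt lam * x))
    (hc0o : c0o = fun x : ℝ =>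
      cB - cB * Real.sqrt lam / (Real.sqrt lam + 1) * Real.exp (-x))
    (hp0i : p0i = fun x : ℝ =>
      G0 * cB / (lam * (Real.sqrt lam + 1)) * (1 - Real.exp (Real.sqrt lam * x)))
    (hp0o : p0o = fun x : ℝ =>
      G0 * cB * (-(x ^ 2) / 2 + Real.sqrt lam / (Real.sqrt lam + 1) * Real.exp (-x) +
        (lam - 1) / (Real.sqrt lam * (Real.sqrt lam + 1)) * x -
        Real.sqrt lam / (Real.sqrt lam + 1))) :
    (∀ x : ℝ, x ≤ 0 → -(deriv (deriv p0i) x) = G0 * c0i x) ∧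
    (∀ x : ℝ, 0 ≤ x → -(deriv (deriv p0o) x) = G0 * c0o x) ∧
    p0i 0 = 0 ∧ p0o 0 = 0 ∧
    deriv p0i 0 = deriv p0o 0 ∧
    (∀ x : ℝ, x ≤ 0 → 0 ≤ p0i x ∧ p0i x ≤ G0 * cB / (lam * (Real.sqrt lam + 1))) := by
  set s := Real.sqrt lam with hsdef
  have hs : 0 < s := Real.sqrt_pos.2 hlam
  have hs2 : s * s = lam := Real.mul_self_sqrt hlam.le
  have hs1 : (0:ℝ) < s + 1 := by linarith
  -- first derivative of p0i
  have hdi : ∀ x : ℝ, HasDerivAt p0i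
      (G0 * cB / (lam * (s + 1)) * (0 - s * Real.exp (s * x))) x := by
    intro x
    rw [hp0i]
    exact ((hasDerivAt_const x (1:ℝ)).sub (hexp_aux s x)).const_mul _
  have hdi' : deriv p0i = fun x => G0 * cB / (lam * (s + 1)) * (0 - s * Real.exp (s * x)) :=
    funext fun x => (hdi x).deriv
  -- second derivative of p0i
  have hddi : ∀ x : ℝ, HasDerivAt (deriv p0i)
      (G0 * cB / (lam * (s + 1)) * (0 - s * (s * Real.exp (s * x)))) x := by
    intro x
    rw [hdi']
    exact ((hasDerivAt_const x (0:ℝ)).sub ((hexp_aux s x).const_mul s)).const_mul _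
  -- first derivative of p0o
  have hdo : ∀ x : ℝ, HasDerivAt p0o
      (G0 * cB * (-(2 * x) / 2 + s / (s + 1) * (-1 * Real.exp (-1 * x)) +
        (lam - 1) / (s * (s + 1)) * 1 - 0)) x := by
    intro x
    rw [hp0o]
    have h1 : HasDerivAt (fun y : ℝ => -(y ^ 2) / 2) (-(2 * x) / 2) x := by
      simpa using ((hasDerivAt_pow 2 x).neg.div_const 2)
    have h2 : HasDerivAt (fun y : ℝ => s / (s + 1) * Real.exp (-y))
        (s / (s + 1) * (-1 * Real.exp (-1 * x))) x := by
      have := (hexp_aux (-1) x).const_mul (s / (s + 1))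
      simpa [neg_mul, one_mul] using this
    have h3 : HasDerivAt (fun y : ℝ => (lam - 1) / (s * (s + 1)) * y)
        ((lam - 1) / (s * (s + 1)) * 1) x := (hasDerivAt_id x).const_mul _
    exact (((h1.add h2).add h3).sub (hasDerivAt_const x _)).const_mul _
  have hdo' : deriv p0o = fun x => G0 * cB * (-(2 * x) / 2 + s / (s + 1) * (-1 * Real.exp (-1 * x)) +
        (lam - 1) / (s * (s + 1)) * 1 - 0) := funext fun x => (hdo x).deriv
  have hddo : ∀ x : ℝ, HasDerivAt (deriv p0o)
      (G0 * cB * (-(2 * 1) / 2 + s / (s + 1) * (-1 * (-1 * Real.exp (-1 * x))) + 0 - 0)) x := by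
    intro x
    rw [hdo']
    have h1 : HasDerivAt (fun y : ℝ => -(2 * y) / 2) (-(2 * 1) / 2) x := by
      simpa using (((hasDerivAt_id x).const_mul (2:ℝ)).neg.div_const 2)
    have h2 : HasDerivAt (fun y : ℝ => s / (s + 1) * (-1 * Real.exp (-1 * y)))
        (s / (s + 1) * (-1 * (-1 * Real.exp (-1 * x)))) x :=
      ((hexp_aux (-1) x).const_mul (-1)).const_mul _
    have h3 : HasDerivAt (fun _ : ℝ => (lam - 1) / (s * (s + 1)) * 1) 0 x := hasDerivAt_const x _
    exact (((h1.add h2).add h3).sub (hasDerivAt_const x _)).const_mul _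
  refine ⟨?_, ?_, ?_, ?_, ?_, ?_⟩
  · intro x _
    rw [(hddi x).deriv, hc0i]
    rw [← hs2]
    field_simp
    ring
  · intro x _
    rw [(hddo x).deriv, hc0o]
    simp only [neg_mul, one_mul, neg_neg]
    field_simp
    ring
  · simp [hp0i]
  · rw [hp0o]; simp [Real.exp_zero]
  · rw [hdi', hdo']
    simp only
    rw [← hs2]
    field_simp
    simp only [mul_zero, neg_zero, Real.exp_zero]
    ring
  · intro x hx
    rw [hp0i]
    have he : Real.exp (s * x) ≤ 1 := by
      rw [Real.exp_le_one_iff]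
      exact mul_nonpos_of_nonneg_of_nonpos hs.le hx
    have hep : 0 < Real.exp (s * x) := Real.exp_pos _
    have hC : 0 < G0 * cB / (lam * (s + 1)) := by positivity
    constructor
    · have : 0 ≤ 1 - Real.exp (s * x) := by linarith
      positivity
    · have h1 : 1 - Real.exp (s * x) ≤ 1 := by linarith
      calc G0 * cB / (lam * (s + 1)) * (1 - Real.exp (s * x))
          ≤ G0 * cB / (lam * (s + 1)) * 1 := by
            exact mul_le_mul_of_nonneg_left h1 hC.le
        _ = G0 * cB / (lam * (s + 1)) := mul_one _
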